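/- Sun's lemma on subnormal subgroups: if G_1,…,G_k are subnormal subgroups of a group G, each of finite index, then the index [G : ⋂_{i=1}^k G_i] divides the product ∏_{i=1}^k [G : G_i]; consequently every prime dividing [G : ⋂_{i=1}^k G_i] divides some [G : G_i]. -/

import Mathlib

/-- A subgroup `H` of `G` is subnormal if there is a chain
`H = H_0 ⊴ H_1 ⊴ ⋯ ⊴ H_n = G` with each term normal in the next. -/
def IsSubnormal {G : Type*} [Group G] (H : Subgroup G) : Prop :=
  ∃ (n : ℕ) (c : Fin (n + 1) → Subgroup G), c 0 = H ∧ c (Fin.last n) = ⊤ ∧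
    ∀ i : Fin n, c i.castSucc ≤ c i.succ ∧
      ((c i.castSucc).subgroupOf (c i.succ)).Normal

private lemma key_aux {G : Type*} [Group G] :
    ∀ n (H : Subgroup G) (c : Fin (n + 1) → Subgroup G), c 0 = H → c (Fin.last n) = ⊤ →
      (∀ i : Fin n, c i.castSucc ≤ c i.succ ∧
        ((c i.castSucc).subgroupOf (c i.succ)).Normal) →
      ∀ K : Subgroup G, H.relIndex K ∣ H.index := by
  intro n
  induction n with
  | zero =>
    intro H c h0 hl _ K
    rw [← h0, show (0 : Fin 1) = Fin.last 0 from rfl, hl]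
    simp [Subgroup.relIndex_top_left]
  | succ n ih =>
    intro H c h0 hl hchain K
    set H₁ := c (1 : Fin (n + 2)) with hH₁
    -- tail chain
    have tail : ∀ i : Fin n, (c ∘ Fin.succ) i.castSucc ≤ (c ∘ Fin.succ) i.succ ∧
        (((c ∘ Fin.succ) i.castSucc).subgroupOf ((c ∘ Fin.succ) i.succ)).Normal := by
      intro i
      have := hchain i.succ
      simpa only [Function.comp_apply, Fin.succ_castSucc] using this
    have htail0 : (c ∘ Fin.succ) 0 = H₁ := by simp [Function.comp, hH₁, Fin.succ_zero_eq_one]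
    have htaill : (c ∘ Fin.succ) (Fin.last n) = ⊤ := by
      simpa [Function.comp, Fin.succ_last] using hl
    have ihK : ∀ K : Subgroup G, H₁.relIndex K ∣ H₁.index :=
      ih H₁ (c ∘ Fin.succ) htail0 htaill tail
    have h01 := hchain 0
    rw [show (0 : Fin (n+1)).castSucc = (0 : Fin (n+2)) from rfl, h0,
      show (0 : Fin (n+1)).succ = (1 : Fin (n+2)) from rfl, ← hH₁] at h01
    obtain ⟨hle, hnorm⟩ := h01
    -- H.relIndex K = H.relIndex (H₁ ⊓ K) * H₁.relIndex K
    have hHK : H ⊓ K = H ⊓ (H₁ ⊓ K) := by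
      rw [← inf_assoc, inf_of_le_left hle]
    have e1 : H.relIndex K = H.relIndex (H₁ ⊓ K) * H₁.relIndex K := by
      rw [← Subgroup.inf_relIndex_right H K, ← Subgroup.inf_relIndex_right H₁ K,
        ← Subgroup.inf_relIndex_right H (H₁ ⊓ K), ← hHK]
      exact (Subgroup.relIndex_mul_relIndex (H ⊓ K) (H₁ ⊓ K) K
        (hHK ▸ inf_le_right) inf_le_right).symm
    -- first factor divides H.relIndex H₁
    have d1 : H.relIndex (H₁ ⊓ K) ∣ H.relIndex H₁ := by
      rw [← Subgroup.relIndex_subgroupOf (inf_le_left : H₁ ⊓ K ≤ H₁)]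
      exact Subgroup.relIndex_dvd_index_of_normal (H := H.subgroupOf H₁)
        (K := (H₁ ⊓ K).subgroupOf H₁)
    have := mul_dvd_mul d1 (ihK K)
    rw [e1]
    calc H.relIndex (H₁ ⊓ K) * H₁.relIndex K ∣ H.relIndex H₁ * H₁.index := this
      _ = H.index := Subgroup.relIndex_mul_index hle

private lemma key {G : Type*} [Group G] {H : Subgroup G} (h : IsSubnormal H)
    (K : Subgroup G) : H.relIndex K ∣ H.index := by
  obtain ⟨n, c, h0, hl, hchain⟩ := h
  exact key_aux n H c h0 hl hchain K

theorem stmt_19 (G : Type*) [Group G] (k : ℕ) (H : Fin k → Subgroup G)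
    (hsub : ∀ i, IsSubnormal (H i)) (hfin : ∀ i, (H i).index ≠ 0) :
    (⨅ i, H i).index ∣ ∏ i, (H i).index ∧
      ∀ p : ℕ, p.Prime → p ∣ (⨅ i, H i).index → ∃ i, p ∣ (H i).index := by
  have main : ∀ s : Finset (Fin k), (s.inf H).index ∣ ∏ i ∈ s, (H i).index := by
    intro s
    induction s using Finset.induction with
    | empty => simp
    | insert a s hnot ih =>
      rw [Finset.inf_insert, Finset.prod_insert hnot]
      set K := s.inf H
      have : (H a ⊓ K).index = (H a).relIndex K * K.index := by
        rw [← Subgroup.inf_relIndex_right (H a) K]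
        exact (Subgroup.relIndex_mul_index (inf_le_right : H a ⊓ K ≤ K)).symm
      rw [this]
      exact mul_dvd_mul (key (hsub a) K) ih
  have hinf : (⨅ i, H i).index = (Finset.univ.inf H).index := by
    congr 1
    rw [Finset.inf_eq_iInf]
    simp
  constructor
  · rw [hinf]
    exact main Finset.univ
  · intro p hp hdvd
    have : p ∣ ∏ i, (H i).index := dvd_trans hdvd ((hinf ▸ main Finset.univ))
    obtain ⟨i, _, hi⟩ := hp.prime.exists_mem_finset_dvd this
    exact ⟨i, hi⟩
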